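/- For every n and k, the function One^k_n : {0,1}^n → [n+1] giving the position of the k-th one (or n+1 if there are fewer than k ones) can be computed by a decision tree over assignment queries of depth k; i.e., rk(One^k_n) ≤ k. -/
import Mathlib


/-- Decision trees over assignment queries: each internal node is labeled by a
linear ordering of the set `A` of assignments (represented by an injection
`A ↪ ℕ` giving each assignment its position in the ordering), with one child per
possible answer; leaves are labeled by outputs. -/
inductive DTree (A O : Type) where
  | leaf (o : O)
  | node (τ : A ↪ ℕ) (child : A → DTree A O)

/-- The τ-first element of the set `C` of assignments consistent with the input. -/
noncomputable def firstConsistent {A : Type} [Nonempty A] (τ : A ↪ ℕ) (C : Finset A) : A :=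
  Function.invFun τ ((C.image τ).min.getD 0)

/-- Depth of a decision tree: maximal number of queries on a root-to-leaf path. -/
def DTree.depth {A O : Type} [Fintype A] : DTree A O → ℕ
  | .leaf _ => 0
  | .node _ c => (Finset.univ.sup fun a => (c a).depth) + 1

/-- Evaluation of a decision tree on an input `w`, where `consSet w` is the set of
assignments consistent with `w`: at each node descend along the child labeled by
the first consistent assignment in the node's ordering. -/
noncomputable def DTree.eval {I A O : Type} [Nonempty A] (consSet : I → Finset A) :
    DTree A O → I → O
  | .leaf o, _ => o
  | .node τ c, w => (c (firstConsistent τ (consSet w))).eval consSet w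

/-- One^k_n(w) : the (1-based) position of the k-th one in w ∈ {0,1}^n, or n+1
if w has fewer than k ones. -/
def oneK (k n : ℕ) (w : Fin n → Bool) : ℕ :=
  (((Finset.range n).filter fun p =>
      (Finset.univ.filter fun j : Fin n => (j : ℕ) ≤ p ∧ w j = true).card = k).min.getD n) + 1

/-- Assignments are pairs (i,b) with i ∈ [n], b ∈ {0,1}; (i,b) is consistent
with w iff w_i = b. -/
def consSetB (n : ℕ) (w : Fin n → Bool) : Finset (Fin n × Bool) :=
  Finset.univ.filter fun a => w a.1 = a.2

def tauF (n p : ℕ) (a : Fin n × Bool) : ℕ :=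
  if a.2 then (if p ≤ (a.1 : ℕ) then (a.1 : ℕ) else n + (a.1 : ℕ)) else 2 * n + (a.1 : ℕ)

def tauE (n p : ℕ) : (Fin n × Bool) ↪ ℕ :=
  ⟨tauF n p, by
    rintro ⟨i, bi⟩ ⟨j, bj⟩ h
    have hi := i.isLt; have hj := j.isLt
    have : bi = bj ∧ (i : ℕ) = (j : ℕ) := by
      cases bi <;> cases bj
      · exact ⟨rfl, by simpa [tauF] using h⟩
      · exfalso; simp [tauF] at h; split_ifs at h <;> omega
      · exfalso; simp [tauF] at h; split_ifs at h <;> omega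
      · refine ⟨rfl, ?_⟩; simp [tauF] at h; split_ifs at h <;> omega
    exact Prod.ext (Fin.ext this.2) this.1⟩

def searchT (n : ℕ) : ℕ → ℕ → DTree (Fin n × Bool) ℕ
  | 0, _ => .leaf (n + 1)
  | j + 1, p => .node (tauE n p) fun a =>
      if (a.2 = true ∧ p ≤ (a.1 : ℕ)) then
        match j with
        | 0 => .leaf ((a.1 : ℕ) + 1)
        | _ + 1 => searchT n j ((a.1 : ℕ) + 1)
      else .leaf (n + 1)

lemma searchT_depth (n : ℕ) : ∀ j p, (searchT n (j + 1) p).depth ≤ j + 1 := by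
  intro j
  induction j with
  | zero =>
    intro p
    simp only [searchT, DTree.depth]
    refine Nat.add_le_add_right ?_ 1
    refine Finset.sup_le fun a _ => ?_
    split <;> simp [DTree.depth]
  | succ j ih =>
    intro p
    simp only [searchT, DTree.depth]
    refine Nat.add_le_add_right ?_ 1
    refine Finset.sup_le fun a _ => ?_
    split
    · exact ih _
    · simp [DTree.depth]

lemma firstConsistent_eq {A : Type} [Nonempty A] (τ : A ↪ ℕ) {C : Finset A} {a : A}
    (ha : a ∈ C) (hmin : ∀ b ∈ C, τ a ≤ τ b) : firstConsistent τ C = a := by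
  have hne : (C.image τ).Nonempty := ⟨τ a, Finset.mem_image_of_mem τ ha⟩
  have h1 : (C.image τ).min' hne = τ a := by
    refine le_antisymm (Finset.min'_le _ _ (Finset.mem_image_of_mem τ ha)) ?_
    refine Finset.le_min' _ _ _ fun b hb => ?_
    obtain ⟨c, hc, rfl⟩ := Finset.mem_image.1 hb
    exact hmin c hc
  have h2 : (C.image τ).min = (τ a : WithBot ℕ) := by
    rw [← Finset.coe_min' hne, h1]; rfl
  unfold firstConsistent
  rw [h2]
  show Function.invFun τ (τ a) = a
  exact Function.leftInverse_invFun τ.injective a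

lemma firstConsistent_mem {A : Type} [Nonempty A] (τ : A ↪ ℕ) {C : Finset A}
    (hC : C.Nonempty) : firstConsistent τ C ∈ C := by
  classical
  obtain ⟨a, ha, hmin⟩ := C.exists_min_image τ hC
  rw [firstConsistent_eq τ ha hmin]
  exact ha

def cnt (n p q : ℕ) (w : Fin n → Bool) : ℕ :=
  (Finset.univ.filter fun i : Fin n => p ≤ (i : ℕ) ∧ (i : ℕ) ≤ q ∧ w i = true).card

def oneKFrom (n j p : ℕ) (w : Fin n → Bool) : ℕ :=
  (((Finset.range n).filter fun q => cnt n p q w = j).min.getD n) + 1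

lemma getD_min_eq {s : Finset ℕ} {d a : ℕ} (ha : a ∈ s) (h : ∀ b ∈ s, a ≤ b) :
    s.min.getD d = a := by
  have hne : s.Nonempty := ⟨a, ha⟩
  have h1 : s.min' hne = a := le_antisymm (Finset.min'_le _ _ ha) (Finset.le_min' _ _ _ h)
  rw [← Finset.coe_min' hne, h1]; rfl

lemma cnt_eq_zero {n p q : ℕ} {w : Fin n → Bool}
    (h : ∀ i : Fin n, p ≤ (i : ℕ) → (i : ℕ) ≤ q → w i ≠ true) : cnt n p q w = 0 := by
  rw [cnt, Finset.card_eq_zero, Finset.filter_eq_empty_iff]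
  rintro i - ⟨h1, h2, h3⟩
  exact h i h1 h2 h3

lemma firstConsistent_char {n p : ℕ} [NeZero n] {w : Fin n → Bool} (i₀ : Fin n)
    (h1 : p ≤ (i₀ : ℕ)) (h2 : w i₀ = true)
    (h3 : ∀ i : Fin n, p ≤ (i : ℕ) → w i = true → (i₀ : ℕ) ≤ (i : ℕ)) :
    firstConsistent (tauE n p) (consSetB n w) = (i₀, true) := by
  apply firstConsistent_eq
  · simp [consSetB, h2]
  · rintro ⟨i, bi⟩ hb
    simp only [consSetB, Finset.mem_filter, Finset.mem_univ, true_and] at hb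
    show tauF n p (i₀, true) ≤ tauF n p (i, bi)
    have hv : tauF n p (i₀, true) = (i₀ : ℕ) := by simp [tauF, h1]
    rw [hv]
    have hlt := i₀.isLt
    cases bi with
    | true =>
      have ht : tauF n p (i, true) = if p ≤ (i : ℕ) then (i : ℕ) else n + (i : ℕ) := by
        simp [tauF]
      rw [ht]
      split_ifs with hp
      · exact h3 i hp hb
      · omega
    | false =>
      have ht : tauF n p (i, false) = 2 * n + (i : ℕ) := by simp [tauF]
      rw [ht]; omega

lemma oneKFrom_empty {n p j : ℕ} {w : Fin n → Bool}
    (h : ∀ i : Fin n, p ≤ (i : ℕ) → w i = false) : oneKFrom n (j + 1) p w = n + 1 := by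
  have : ((Finset.range n).filter fun q => cnt n p q w = j + 1) = ∅ := by
    rw [Finset.filter_eq_empty_iff]
    intro q _
    have : cnt n p q w = 0 := cnt_eq_zero fun i hi _ hw => by simp [h i hi] at hw
    omega
  rw [oneKFrom, this]
  rfl

lemma oneKFrom_one {n p : ℕ} {w : Fin n → Bool} (i₀ : Fin n)
    (h1 : p ≤ (i₀ : ℕ)) (h2 : w i₀ = true)
    (h3 : ∀ i : Fin n, p ≤ (i : ℕ) → w i = true → (i₀ : ℕ) ≤ (i : ℕ)) :
    oneKFrom n 1 p w = (i₀ : ℕ) + 1 := by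
  rw [oneKFrom]
  congr 1
  apply getD_min_eq
  · rw [Finset.mem_filter]
    refine ⟨Finset.mem_range.2 i₀.isLt, ?_⟩
    have hset : (Finset.univ.filter fun i : Fin n => p ≤ (i : ℕ) ∧ (i : ℕ) ≤ (i₀ : ℕ) ∧ w i = true)
        = {i₀} := by
      ext i
      simp only [Finset.mem_filter, Finset.mem_univ, true_and, Finset.mem_singleton]
      constructor
      · rintro ⟨ha, hb, hc⟩
        exact Fin.ext (le_antisymm hb (h3 i ha hc))
      · rintro rfl
        exact ⟨h1, le_refl _, h2⟩
    rw [cnt, hset, Finset.card_singleton]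
  · intro q hq
    rw [Finset.mem_filter] at hq
    by_contra hlt
    push_neg at hlt
    have : cnt n p q w = 0 := cnt_eq_zero fun i hi hiq hw => by
      have := h3 i hi hw; omega
    omega

lemma oneKFrom_step {n p j : ℕ} {w : Fin n → Bool} (i₀ : Fin n)
    (h1 : p ≤ (i₀ : ℕ)) (h2 : w i₀ = true)
    (h3 : ∀ i : Fin n, p ≤ (i : ℕ) → w i = true → (i₀ : ℕ) ≤ (i : ℕ)) :
    oneKFrom n (j + 2) p w = oneKFrom n (j + 1) ((i₀ : ℕ) + 1) w := by
  have hfe : ((Finset.range n).filter fun q => cnt n p q w = j + 2)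
      = ((Finset.range n).filter fun q => cnt n ((i₀ : ℕ) + 1) q w = j + 1) := by
    apply Finset.filter_congr
    intro q _
    rcases lt_or_ge q (i₀ : ℕ) with hq | hq
    · have hz1 : cnt n p q w = 0 := cnt_eq_zero fun i hi hiq hw => by
        have := h3 i hi hw; omega
      have hz2 : cnt n ((i₀ : ℕ) + 1) q w = 0 := cnt_eq_zero fun i hi hiq hw => by omega
      constructor <;> intro h <;> omega
    · have hins : (Finset.univ.filter fun i : Fin n => p ≤ (i : ℕ) ∧ (i : ℕ) ≤ q ∧ w i = true)
          = insert i₀ (Finset.univ.filter fun i : Fin n =>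
              (i₀ : ℕ) + 1 ≤ (i : ℕ) ∧ (i : ℕ) ≤ q ∧ w i = true) := by
        ext i
        simp only [Finset.mem_filter, Finset.mem_univ, true_and, Finset.mem_insert]
        constructor
        · rintro ⟨ha, hb, hc⟩
          have := h3 i ha hc
          rcases eq_or_lt_of_le this with he | hl
          · exact Or.inl (Fin.ext he.symm)
          · exact Or.inr ⟨hl, hb, hc⟩
        · rintro (rfl | ⟨ha, hb, hc⟩)
          · exact ⟨h1, hq, h2⟩
          · exact ⟨le_trans h1 (by omega), hb, hc⟩
      have hnm : i₀ ∉ (Finset.univ.filter fun i : Fin n =>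
          (i₀ : ℕ) + 1 ≤ (i : ℕ) ∧ (i : ℕ) ≤ q ∧ w i = true) := by
        simp only [Finset.mem_filter, Finset.mem_univ, true_and]
        rintro ⟨ha, -, -⟩; omega
      have : cnt n p q w = cnt n ((i₀ : ℕ) + 1) q w + 1 := by
        rw [cnt, cnt, hins, Finset.card_insert_of_notMem hnm]
      omega
  rw [oneKFrom, oneKFrom, hfe]

lemma eval_searchT (n : ℕ) [NeZero n] :
    ∀ j p (w : Fin n → Bool),
      (searchT n (j + 1) p).eval (consSetB n) w = oneKFrom n (j + 1) p w := by
  intro j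
  induction j with
  | zero =>
    intro p w
    have hCne : (consSetB n w).Nonempty :=
      ⟨(⟨0, Nat.pos_of_ne_zero (NeZero.ne n)⟩, w ⟨0, Nat.pos_of_ne_zero (NeZero.ne n)⟩),
        by simp [consSetB]⟩
    by_cases hex : ∃ i : Fin n, p ≤ (i : ℕ) ∧ w i = true
    · set S := Finset.univ.filter fun i : Fin n => p ≤ (i : ℕ) ∧ w i = true with hS
      have hSne : S.Nonempty := by
        obtain ⟨i, hi1, hi2⟩ := hex
        exact ⟨i, by simp [hS, hi1, hi2]⟩
      obtain ⟨i₀, hmem, hmin⟩ := Finset.exists_min_image S (fun i : Fin n => (i : ℕ)) hSne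
      rw [hS, Finset.mem_filter] at hmem
      have h3 : ∀ i : Fin n, p ≤ (i : ℕ) → w i = true → (i₀ : ℕ) ≤ (i : ℕ) := by
        intro i ha hb
        exact hmin i (by simp [hS, ha, hb])
      rw [searchT, DTree.eval, firstConsistent_char i₀ hmem.2.1 hmem.2.2 h3,
        if_pos ⟨rfl, hmem.2.1⟩]
      rw [DTree.eval, oneKFrom_one i₀ hmem.2.1 hmem.2.2 h3]
    · push_neg at hex
      have hfc := firstConsistent_mem (tauE n p) hCne
      rw [searchT, DTree.eval]
      set a := firstConsistent (tauE n p) (consSetB n w) with ha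
      have hcond : ¬(a.2 = true ∧ p ≤ (a.1 : ℕ)) := by
        rintro ⟨hb, hp⟩
        simp only [consSetB, Finset.mem_filter, Finset.mem_univ, true_and] at hfc
        rw [hb] at hfc
        exact absurd (hex a.1 hp) (by simp [hfc])
      rw [if_neg hcond, DTree.eval,
        oneKFrom_empty fun i hi => by
          have := hex i hi
          cases h : w i
          · rfl
          · exact absurd h this]
  | succ j ih =>
    intro p w
    have hCne : (consSetB n w).Nonempty :=
      ⟨(⟨0, Nat.pos_of_ne_zero (NeZero.ne n)⟩, w ⟨0, Nat.pos_of_ne_zero (NeZero.ne n)⟩),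
        by simp [consSetB]⟩
    by_cases hex : ∃ i : Fin n, p ≤ (i : ℕ) ∧ w i = true
    · set S := Finset.univ.filter fun i : Fin n => p ≤ (i : ℕ) ∧ w i = true with hS
      have hSne : S.Nonempty := by
        obtain ⟨i, hi1, hi2⟩ := hex
        exact ⟨i, by simp [hS, hi1, hi2]⟩
      obtain ⟨i₀, hmem, hmin⟩ := Finset.exists_min_image S (fun i : Fin n => (i : ℕ)) hSne
      rw [hS, Finset.mem_filter] at hmem
      have h3 : ∀ i : Fin n, p ≤ (i : ℕ) → w i = true → (i₀ : ℕ) ≤ (i : ℕ) := by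
        intro i ha hb
        exact hmin i (by simp [hS, ha, hb])
      rw [searchT, DTree.eval, firstConsistent_char i₀ hmem.2.1 hmem.2.2 h3,
        if_pos ⟨rfl, hmem.2.1⟩]
      rw [ih ((i₀ : ℕ) + 1) w, oneKFrom_step i₀ hmem.2.1 hmem.2.2 h3]
    · push_neg at hex
      have hfc := firstConsistent_mem (tauE n p) hCne
      rw [searchT, DTree.eval]
      set a := firstConsistent (tauE n p) (consSetB n w) with ha
      have hcond : ¬(a.2 = true ∧ p ≤ (a.1 : ℕ)) := by
        rintro ⟨hb, hp⟩
        simp only [consSetB, Finset.mem_filter, Finset.mem_univ, true_and] at hfc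
        rw [hb] at hfc
        exact absurd (hex a.1 hp) (by simp [hfc])
      rw [if_neg hcond, DTree.eval,
        oneKFrom_empty fun i hi => by
          have := hex i hi
          cases h : w i
          · rfl
          · exact absurd h this]

/-- One^k_n can be computed by a decision tree over assignment queries of depth k;
i.e. rk(One^k_n) ≤ k. -/
theorem oneK_rank_upper_bound (k n : ℕ) (hk : 1 ≤ k) [NeZero n] :
    ∃ T : DTree (Fin n × Bool) ℕ,
      T.depth ≤ k ∧ ∀ w : Fin n → Bool, T.eval (consSetB n) w = oneK k n w := by
  obtain ⟨j, rfl⟩ : ∃ j, k = j + 1 := ⟨k - 1, by omega⟩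
  refine ⟨searchT n (j + 1) 0, searchT_depth n j 0, fun w => ?_⟩
  rw [eval_searchT n j 0 w]
  unfold oneK oneKFrom cnt
  simp only [Nat.zero_le, true_and]
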